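/- Let λ_1,…,λ_k ∈ ℂ be distinct, ŵ ∈ ℂ^k, h ∈ ℂ^k. Define B̂ = ŵ (column vector), R = 𝟙_kᵀ (all-ones row vector), Λ = diag(λ_1,…,λ_k), Â = Λ − B̂R, and Ĉ = (h_1,…,h_k) (row vector). Then for every s ∈ ℂ not an eigenvalue of Â and with s ≠ λ_i for all i and 1 + Σ_{i=1}^k ŵ_i/(s−λ_i) ≠ 0, Ĉ(sI_k − Â)^{-1}B̂ = (Σ_{i=1}^k ŵ_i h_i/(s−λ_i)) / (1 + Σ_{i=1}^k ŵ_i/(s−λ_i)). -/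

import Mathlib

open Matrix

theorem barycentric_transfer_function (k : ℕ) (lam : Fin k → ℂ)
    (hlam : Function.Injective lam) (w h : Fin k → ℂ) (s : ℂ)
    (A : Matrix (Fin k) (Fin k) ℂ)
    (hA : A = Matrix.diagonal lam - Matrix.vecMulVec w (fun _ => (1 : ℂ)))
    (hs : IsUnit (s • (1 : Matrix (Fin k) (Fin k) ℂ) - A))
    (hslam : ∀ i, s ≠ lam i)
    (hden : 1 + ∑ i, w i / (s - lam i) ≠ 0) :
    h ⬝ᵥ ((s • (1 : Matrix (Fin k) (Fin k) ℂ) - A)⁻¹ *ᵥ w) =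
      (∑ i, w i * h i / (s - lam i)) / (1 + ∑ i, w i / (s - lam i)) := by
  set S : ℂ := ∑ i, w i / (s - lam i) with hS
  have hne : ∀ i, s - lam i ≠ 0 := fun i => sub_ne_zero.mpr (hslam i)
  set x : Fin k → ℂ := fun i => w i / ((s - lam i) * (1 + S)) with hx
  have hsumx : ∑ j, x j = S / (1 + S) := by
    rw [hS, Finset.sum_div]
    refine Finset.sum_congr rfl fun j _ => ?_
    rw [hx]
    field_simp
    rw [← hS, mul_div_mul_right _ _ hden]
  have hM : (s • (1 : Matrix (Fin k) (Fin k) ℂ) - A) *ᵥ x = w := by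
    funext i
    have hrow : ((s • (1 : Matrix (Fin k) (Fin k) ℂ) - A) *ᵥ x) i
        = (s - lam i) * x i + w i * ∑ j, x j := by
      simp only [Matrix.mulVec, dotProduct, hA, Matrix.sub_apply, Matrix.smul_apply,
        Matrix.one_apply, Matrix.diagonal_apply, Matrix.vecMulVec_apply, smul_eq_mul,
        mul_one]
      rw [Finset.mul_sum, show (∑ j, ((s * if i = j then 1 else 0) -
            ((if i = j then lam i else 0) - w i)) * x j)
          = ∑ j, ((if i = j then (s - lam i) * x j else 0) + w i * x j) from
        Finset.sum_congr rfl fun j _ => by split_ifs with hij <;> simp <;> ring,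
        Finset.sum_add_distrib, Finset.sum_ite_eq]
      simp
    rw [hrow, hsumx]
    have hxi : (s - lam i) * x i = w i / (1 + S) := by
      simp only [hx]
      rw [mul_div_assoc']
      exact mul_div_mul_left _ _ (hne i)
    rw [hxi]
    field_simp
  have hinv : (s • (1 : Matrix (Fin k) (Fin k) ℂ) - A)⁻¹ *ᵥ w = x := by
    conv_lhs => rw [← hM]
    rw [Matrix.mulVec_mulVec, Matrix.nonsing_inv_mul _ ((Matrix.isUnit_iff_isUnit_det _).mp hs),
      Matrix.one_mulVec]
  rw [hinv]
  simp only [dotProduct, hx]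
  rw [Finset.sum_div]
  refine Finset.sum_congr rfl fun i _ => ?_
  field_simp
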